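/- Let M be an n×m (0,1)-matrix of rank m with n, m > 1 whose unique solution λ of Mλ = 𝟙 has all coordinates strictly positive. Then Σ_{i=1}^m λ_i > 1. -/
import Mathlib


/-- If `M` is an `n × m` `(0,1)`-matrix of rank `m` with `n, m > 1`, and `Mλ = 𝟙`
with all coordinates of `λ` strictly positive, then `∑ λ_i > 1`. -/
theorem stmt11 (n m : ℕ) (hn : 1 < n) (hm : 1 < m)
    (M : Matrix (Fin n) (Fin m) ℝ) (h01 : ∀ i j, M i j = 0 ∨ M i j = 1)
    (hrk : M.rank = m) (l : Fin m → ℝ) (hMl : M.mulVec l = 1)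
    (hpos : ∀ i, 0 < l i) :
    1 < ∑ i, l i := by
  by_contra hle
  push_neg at hle
  -- Every entry of M is 1
  have hall : ∀ i j, M i j = 1 := by
    intro i j
    have hrow : ∑ k, M i k * l k = 1 := by
      have := congrFun hMl i
      simpa [Matrix.mulVec, dotProduct] using this
    have hterm : ∀ k, M i k * l k ≤ l k := by
      intro k
      rcases h01 i k with h | h <;> simp [h, (hpos k).le]
    have hsum_le : ∑ k, M i k * l k ≤ ∑ k, l k :=
      Finset.sum_le_sum fun k _ => hterm k
    have heq : ∑ k, M i k * l k = ∑ k, l k := by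
      have : ∑ k, l k ≤ 1 := hle
      linarith [hrow]
    have heqterm := (Finset.sum_eq_sum_iff_of_le fun k _ => hterm k).mp heq
    have := heqterm j (Finset.mem_univ j)
    rcases h01 i j with h | h
    · exfalso; rw [h, zero_mul] at this; exact (hpos j).ne this
    · exact h
  -- mulVec is injective since rank = m
  have hinj : Function.Injective M.mulVecLin := by
    rw [← LinearMap.ker_eq_bot]
    have hrn := LinearMap.finrank_range_add_finrank_ker M.mulVecLin
    have hdom : Module.finrank ℝ (Fin m → ℝ) = m := by simp
    have hr : Module.finrank ℝ (LinearMap.range M.mulVecLin) = m := by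
      simpa [Matrix.rank] using hrk
    have hker0 : Module.finrank ℝ (LinearMap.ker M.mulVecLin) = 0 := by omega
    exact Submodule.finrank_eq_zero.mp hker0
  -- Build a nonzero kernel vector
  have a : Fin m := ⟨0, by omega⟩
  have b : Fin m := ⟨1, by omega⟩
  set a : Fin m := ⟨0, by omega⟩ with ha
  set b : Fin m := ⟨1, by omega⟩ with hb
  have hab : a ≠ b := by simp [ha, hb, Fin.ext_iff]
  set v : Fin m → ℝ := Pi.single a 1 - Pi.single b 1 with hv
  have hsumv : ∑ j, v j = 0 := by
    simp [hv, Finset.sum_sub_distrib, Finset.sum_pi_single']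
  have hMv : M.mulVecLin v = 0 := by
    funext i
    simp only [Matrix.mulVecLin_apply, Matrix.mulVec, dotProduct, hall, one_mul]
    simpa using hsumv
  have hv0 : v = 0 := hinj (by simpa using hMv)
  have : v a = 0 := congrFun hv0 a
  simp [hv, Pi.single_apply, hab] at this
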